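/- Structure theorem for weakly integral fusion rings (the paper's Proposition 2.2, adapted from EGNO Prop. 3.5.7): Let (I, 1, *, N) be a fusion ring with dimension function d, and assume it is weakly integral, i.e. for every x ∈ I the square d(x)² is a positive integer. Then there exist: a finite abelian group E in which every element g satisfies g·g = 1; a surjective map deg : I → E with deg(1) = 1, deg(x*) = deg(x), and such that N^z_{xy} > 0 implies deg(z) = deg(x)·deg(y); an injective function n : E → ℕ taking squarefree positive integer values with n(1) = 1; and positive integers a_x for x ∈ I; such that d(x) = a_x·√(n(deg x)) for every x ∈ I, and moreover for all g, h ∈ E the real number √(n(g)·n(h)/n(g·h)) is a positive integer. -/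

import Mathlib

open Polynomial IntermediateField Module

set_option maxHeartbeats 1600000

/-- Trace of a square root of a non-square natural number is zero. -/
lemma aux_trace_sqrt (K : IntermediateField ℚ ℝ) [FiniteDimensional ℚ K]
    {x : K} {n : ℕ} (hn : ¬ IsSquare n) (hx : (x : ℝ) ^ 2 = (n : ℝ)) :
    Algebra.trace ℚ K x = 0 := by
  have hirr : Irrational (Real.sqrt n) := irrational_sqrt_natCast_iff.mpr hn
  have hxirr : Irrational (x : ℝ) := by
    rcases le_or_gt 0 (x : ℝ) with h | h
    · have hxe : (x : ℝ) = Real.sqrt n := by rw [← hx, Real.sqrt_sq h]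
      rwa [hxe]
    · have hxe : (x : ℝ) = -Real.sqrt n := by
        rw [← hx, Real.sqrt_sq_eq_abs, abs_of_neg h, neg_neg]
      rw [hxe]; exact hirr.neg
  have hx2 : x ^ 2 = algebraMap ℚ K ((n : ℚ)) := by
    apply (algebraMap K ℝ).injective
    rw [map_pow]
    have h1 : (algebraMap K ℝ) x = (x : ℝ) := rfl
    have h2 : (algebraMap K ℝ) (algebraMap ℚ K (n : ℚ)) = ((n : ℚ) : ℝ) := by
      rw [← IsScalarTower.algebraMap_apply]
      simp
    rw [h1, h2, hx]
    push_cast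
    rfl
  have hint : IsIntegral ℚ x := IsIntegral.of_finite ℚ x
  set p : Polynomial ℚ := X ^ 2 - C (n : ℚ) with hp
  have hpm : p.Monic := monic_X_pow_sub_C _ two_ne_zero
  have haev : Polynomial.aeval x p = 0 := by
    simp [hp, hx2, sub_eq_zero]
  have hdvd : minpoly ℚ x ∣ p := minpoly.dvd ℚ x haev
  have hpdeg : p.natDegree = 2 := natDegree_X_pow_sub_C
  have h1 : (minpoly ℚ x).natDegree ≤ 2 :=
    hpdeg ▸ Polynomial.natDegree_le_of_dvd hdvd hpm.ne_zero
  have h2 : (minpoly ℚ x).natDegree ≠ 1 := by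
    intro hdeg1
    obtain ⟨q, hq⟩ := minpoly.natDegree_eq_one_iff.mp hdeg1
    apply hxirr
    refine ⟨q, ?_⟩
    have : (algebraMap K ℝ) (algebraMap ℚ K q) = (x : ℝ) := by rw [hq]; rfl
    rw [← IsScalarTower.algebraMap_apply] at this
    simpa using this
  have h3 : 0 < (minpoly ℚ x).natDegree := minpoly.natDegree_pos hint
  have hmdeg : (minpoly ℚ x).natDegree = 2 := by omega
  obtain ⟨c, hc⟩ := hdvd
  have hcm : c.Monic := (minpoly.monic hint).of_mul_monic_left (hc ▸ hpm)
  have hcdeg : c.natDegree = 0 := by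
    have hmul := Polynomial.natDegree_mul (minpoly.ne_zero hint) hcm.ne_zero
    rw [← hc] at hmul
    omega
  have hc1 : c = 1 := hcm.natDegree_eq_zero.mp hcdeg
  have hmin : minpoly ℚ x = p := by rw [hc, hc1, mul_one]
  have hnext : (minpoly ℚ x).nextCoeff = 0 := by
    rw [hmin, Polynomial.nextCoeff_of_natDegree_pos (by rw [hpdeg]; norm_num), hpdeg]
    simp [hp, coeff_X_pow]
  rw [trace_eq_trace_adjoin ℚ x]
  have hg : Algebra.trace ℚ (↥(ℚ⟮x⟯ : IntermediateField ℚ K)) (IntermediateField.AdjoinSimple.gen ℚ x) = 0 := by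
    rw [← IntermediateField.adjoin.powerBasis_gen hint]
    erw [PowerBasis.trace_gen_eq_nextCoeff_minpoly]
    rw [IntermediateField.adjoin.powerBasis_gen hint]
    erw [IntermediateField.minpoly_gen]
    rw [hnext, neg_zero]
  erw [hg, smul_zero]

/-- A rational linear combination (with natural coefficients) of square roots of
non-square naturals equal to a rational number must have all coefficients zero. -/
lemma aux_sum_sqrt_rat {ι : Type*} (s : Finset ι) (m c : ι → ℕ)
    (hm : ∀ i ∈ s, ¬ IsSquare (m i)) (q : ℚ)
    (h : ∑ i ∈ s, (c i : ℝ) * Real.sqrt (m i) = (q : ℝ)) :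
    ∀ i ∈ s, c i = 0 := by
  classical
  set S : Set ℝ := ((s.image fun i => Real.sqrt (m i) : Finset ℝ) : Set ℝ) with hS
  haveI : Finite S := (s.image fun i => Real.sqrt (m i)).finite_toSet.to_subtype
  have hint : ∀ y ∈ S, IsIntegral ℚ y := by
    intro y hy
    simp only [hS, Finset.coe_image, Set.mem_image, Finset.mem_coe] at hy
    obtain ⟨i, hi, rfl⟩ := hy
    apply IsIntegral.of_pow (n := 2) (by norm_num)
    rw [Real.sq_sqrt (by positivity)]
    have hcast : ((m i : ℝ)) = algebraMap ℚ ℝ ((m i : ℚ)) := by push_cast; rfl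
    rw [hcast]; exact isIntegral_algebraMap
  set K : IntermediateField ℚ ℝ := IntermediateField.adjoin ℚ S with hK
  haveI : FiniteDimensional ℚ K := IntermediateField.finiteDimensional_adjoin hint
  have hmem : ∀ i ∈ s, Real.sqrt (m i) ∈ K := by
    intro i hi
    apply IntermediateField.subset_adjoin ℚ S
    simp only [hS, Finset.coe_image, Set.mem_image, Finset.mem_coe]
    exact ⟨i, hi, rfl⟩
  set α : K := ∑ i ∈ s.attach,
    ((c i.1 : K) * (⟨Real.sqrt (m i.1), hmem i.1 i.2⟩ : K)) with hα
  have hcoe : (α : ℝ) = (q : ℝ) := by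
    rw [hα, AddSubmonoidClass.coe_finset_sum, ← h, ← Finset.sum_attach s
      (fun i => (c i : ℝ) * Real.sqrt (m i))]
    apply Finset.sum_congr rfl
    intro i _
    push_cast
    rfl
  have hαq : α = algebraMap ℚ K q := by
    apply (algebraMap K ℝ).injective
    have h2 : (algebraMap K ℝ) (algebraMap ℚ K q) = ((q : ℚ) : ℝ) := by
      rw [← IsScalarTower.algebraMap_apply]; rfl
    rw [h2]
    exact hcoe
  have htr0 : Algebra.trace ℚ K α = 0 := by
    rw [hα, map_sum]
    apply Finset.sum_eq_zero
    intro i _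
    have hsm : ((c i.1 : K) * (⟨Real.sqrt (m i.1), hmem i.1 i.2⟩ : K))
        = (c i.1 : ℚ) • (⟨Real.sqrt (m i.1), hmem i.1 i.2⟩ : K) := by
      rw [Algebra.smul_def, map_natCast]
    rw [hsm, map_smul]
    have htr := aux_trace_sqrt K (x := (⟨Real.sqrt (m i.1), hmem i.1 i.2⟩ : K))
      (hm i.1 i.2) (by
        simpa using Real.sq_sqrt (show (0:ℝ) ≤ (m i.1 : ℝ) by positivity))
    rw [htr, smul_zero]
  have hq0 : q = 0 := by
    rw [hαq, Algebra.trace_algebraMap] at htr0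
    have hfr : Module.finrank ℚ K ≠ 0 := Module.finrank_pos.ne'
    simpa [smul_eq_mul, hfr] using htr0
  rw [hq0] at h
  push_cast at h
  intro i hi
  have hterm := (Finset.sum_eq_zero_iff_of_nonneg (fun j _ => by positivity)).mp h i hi
  have hmi0 : (m i : ℝ) ≠ 0 := by
    intro h0
    apply hm i hi
    have : m i = 0 := by exact_mod_cast h0
    rw [this]; exact ⟨0, rfl⟩
  have hs0 : Real.sqrt (m i) ≠ 0 := by
    refine ne_of_gt (Real.sqrt_pos.mpr ?_)
    rcases (Nat.cast_nonneg (m i) : (0:ℝ) ≤ m i).lt_or_eq with h' | h'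
    · exact h'
    · exact absurd h'.symm hmi0
  rcases mul_eq_zero.mp hterm with h' | h'
  · exact_mod_cast h'
  · exact absurd h' hs0

/-- Two squarefree naturals whose product is a square are equal. -/
lemma aux_squarefree_eq {m s : ℕ} (hm : Squarefree m) (hs : Squarefree s)
    (h : IsSquare (m * s)) : m = s := by
  have hm0 : m ≠ 0 := hm.ne_zero
  have hs0 : s ≠ 0 := hs.ne_zero
  obtain ⟨k, hk⟩ := h
  have hk0 : k ≠ 0 := by
    intro h0
    rw [h0, mul_zero] at hk
    exact (Nat.mul_ne_zero hm0 hs0) hk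
  have hfac : m.factorization = s.factorization := by
    ext p
    by_cases hp : p.Prime
    · have h1 : m.factorization p ≤ 1 :=
        (Nat.squarefree_iff_factorization_le_one hm0).mp hm p
      have h2 : s.factorization p ≤ 1 :=
        (Nat.squarefree_iff_factorization_le_one hs0).mp hs p
      have heq : m.factorization p + s.factorization p
          = k.factorization p + k.factorization p := by
        have hcongr := congrArg Nat.factorization hk
        rw [Nat.factorization_mul hm0 hs0, Nat.factorization_mul hk0 hk0] at hcongr
        exact DFunLike.congr_fun hcongr p
      omega
    · simp [Nat.factorization_eq_zero_of_not_prime _ hp]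
  exact Nat.factorization_inj (by simp [hm0]) (by simp [hs0]) hfac

/-- A squarefree square is 1. -/
lemma aux_squarefree_isSquare {m : ℕ} (hm : Squarefree m) (h : IsSquare m) : m = 1 :=
  aux_squarefree_eq hm squarefree_one (by simpa using h)

set_option maxHeartbeats 3200000 in
/-- **Structure theorem for weakly integral fusion rings**
(Proposition 2.2 of the paper, adapted from EGNO Prop. 3.5.7).

A fusion ring is given by a finite type `I`, a unit `one`, an involution `star`,
and fusion coefficients `N x y z` (the multiplicity `N^z_{xy}` of `z` in `x ⊗ y`)
satisfying associativity, the unit axioms and Frobenius reciprocity, together with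
a dimension function `d`.  If the fusion ring is weakly integral, i.e. `d x ^ 2`
is a positive integer for every `x`, then there is a finite abelian group `E` all
of whose elements square to the identity, a surjective grading `deg : I → E`, an
injective system of squarefree positive integers `n : E → ℕ` with `n 1 = 1`, and
positive integers `a x`, such that `d x = a x * √(n (deg x))` for all `x`, and
`√(n g * n h / n (g * h))` is a positive integer for all `g h : E`. -/
theorem weakly_integral_structure
    {I : Type*} [Fintype I] [DecidableEq I]
    (one : I) (star : I → I) (N : I → I → I → ℕ)
    (h_star_one : star one = one)
    (h_assoc : ∀ x y z u : I,
      ∑ w : I, N x y w * N w z u = ∑ w : I, N y z w * N x w u)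
    (h_one_left : ∀ x y : I, N one x y = if x = y then 1 else 0)
    (h_one_right : ∀ x y : I, N x one y = if x = y then 1 else 0)
    (h_frob₁ : ∀ x y z : I, N x y z = N (star x) z y)
    (h_frob₂ : ∀ x y z : I, N x y z = N z (star y) x)
    (d : I → ℝ)
    (hd_pos : ∀ x, 0 < d x)
    (hd_star : ∀ x, d (star x) = d x)
    (hd_mul : ∀ x y, d x * d y = ∑ z : I, (N x y z : ℝ) * d z)
    (h_weakly_integral : ∀ x, ∃ k : ℕ, 0 < k ∧ d x ^ 2 = (k : ℝ)) :
    ∃ (E : Type) (_ : Fintype E) (_ : CommGroup E),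
      (∀ g : E, g * g = 1) ∧
      ∃ (deg : I → E) (n : E → ℕ) (a : I → ℕ),
        Function.Surjective deg ∧
        deg one = 1 ∧
        (∀ x, deg (star x) = deg x) ∧
        (∀ x y z, 0 < N x y z → deg z = deg x * deg y) ∧
        Function.Injective n ∧
        (∀ g, Squarefree (n g) ∧ 0 < n g) ∧
        n 1 = 1 ∧
        (∀ x, 0 < a x) ∧
        (∀ x, d x = (a x : ℝ) * Real.sqrt (n (deg x))) ∧
        (∀ g h : E, ∃ k : ℕ, 0 < k ∧
          Real.sqrt ((n g : ℝ) * (n h : ℝ) / (n (g * h) : ℝ)) = (k : ℝ)) := by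
  classical
  choose k hk0 hdk using h_weakly_integral
  have hdec : ∀ x, ∃ mm aa : ℕ, 0 < mm ∧ 0 < aa ∧ aa ^ 2 * mm = k x ∧ Squarefree mm := by
    intro x
    obtain ⟨mm, aa, hm, ha, hab, hsf⟩ := Nat.sq_mul_squarefree_of_pos (hk0 x)
    exact ⟨mm, aa, hm, ha, hab, hsf⟩
  choose m a hm0 ha0 hprod hsf using hdec
  have hd_eq : ∀ x, d x = (a x : ℝ) * Real.sqrt (m x) := by
    intro x
    have h1 : d x = Real.sqrt (k x) := by
      rw [← hdk x, Real.sqrt_sq (hd_pos x).le]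
    rw [h1, ← hprod x]
    push_cast
    rw [Real.sqrt_mul (by positivity), Real.sqrt_sq (by positivity)]
  have hsqm_pos : ∀ x, (0:ℝ) < Real.sqrt (m x) :=
    fun x => Real.sqrt_pos.mpr (by exact_mod_cast hm0 x)
  have ha_pos : ∀ x, (0:ℝ) < (a x : ℝ) := fun x => by exact_mod_cast ha0 x
  -- the dimension of the unit is 1
  have hd_one : d one = 1 := by
    have h1 : d one * d one = d one := by
      rw [hd_mul one one]
      have hterm : ∀ z : I, ((N one one z : ℝ)) * d z = (if one = z then d z else 0) := by
        intro z; rw [h_one_left one z]; split <;> simp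
      rw [Finset.sum_congr rfl fun z _ => hterm z, Finset.sum_ite_eq]
      simp
    nlinarith [hd_pos one]
  -- existence of a constituent
  have hex : ∀ x y, ∃ z, N x y z ≠ 0 := by
    intro x y
    by_contra hc
    push_neg at hc
    have h0 : d x * d y = 0 := by
      rw [hd_mul x y]
      apply Finset.sum_eq_zero
      intro z _; rw [hc z]; simp
    exact absurd h0 (mul_pos (hd_pos x) (hd_pos y)).ne'
  -- KEY: all constituents of a product have the same squarefree part
  have hKEY : ∀ x y, ∃ s' t' : ℕ, 0 < s' ∧ 0 < t' ∧ t' ^ 2 * s' = m x * m y ∧ Squarefree s' ∧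
      ∀ w, N x y w ≠ 0 → m w = s' := by
    intro x y
    obtain ⟨s', t', hs'0, ht'0, hst, hsfs'⟩ := Nat.sq_mul_squarefree_of_pos
      (Nat.mul_pos (hm0 x) (hm0 y))
    refine ⟨s', t', hs'0, ht'0, hst, hsfs', ?_⟩
    have hsq : Real.sqrt (m x) * Real.sqrt (m y) = (t' : ℝ) * Real.sqrt s' := by
      have hc : ((m x : ℝ)) * (m y) = ((t' : ℝ)) ^ 2 * (s' : ℝ) := by exact_mod_cast hst.symm
      rw [← Real.sqrt_mul (by positivity), hc, Real.sqrt_mul (by positivity),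
        Real.sqrt_sq (by positivity)]
    have e1 : ∑ w : I, ((N x y w * a w : ℕ) : ℝ) * Real.sqrt (m w)
        = ((a x * a y * t' : ℕ) : ℝ) * Real.sqrt s' := by
      have lhs : ∑ w : I, ((N x y w * a w : ℕ) : ℝ) * Real.sqrt (m w) = d x * d y := by
        rw [hd_mul x y]
        apply Finset.sum_congr rfl
        intro w _
        rw [hd_eq w]; push_cast; ring
      rw [lhs, hd_eq x, hd_eq y]
      push_cast
      linear_combination ((a x : ℝ) * (a y : ℝ)) * hsq
    -- multiply by √s'
    have e2 : ∑ w : I, ((N x y w * a w : ℕ) : ℝ) * (Real.sqrt (m w) * Real.sqrt s')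
        = ((a x * a y * t' : ℕ) : ℝ) * (s' : ℝ) := by
      have := congrArg (fun t => t * Real.sqrt s') e1
      simp only [Finset.sum_mul] at this
      calc ∑ w : I, ((N x y w * a w : ℕ) : ℝ) * (Real.sqrt (m w) * Real.sqrt s')
          = ∑ w : I, (((N x y w * a w : ℕ) : ℝ) * Real.sqrt (m w)) * Real.sqrt s' := by
            apply Finset.sum_congr rfl; intro w _; ring
        _ = (((a x * a y * t' : ℕ) : ℝ) * Real.sqrt s') * Real.sqrt s' := this
        _ = ((a x * a y * t' : ℕ) : ℝ) * (s' : ℝ) := by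
            rw [mul_assoc, Real.mul_self_sqrt (by positivity)]
    set S : Finset I := Finset.univ.filter (fun w => m w ≠ s') with hS
    set q : ℚ := ((a x * a y * t' * s' : ℕ) : ℚ)
      - ((∑ w ∈ Finset.univ.filter (fun w => ¬ (m w ≠ s')), (N x y w * a w * s' : ℕ) : ℕ) : ℚ)
      with hq
    have e3 : ∑ w ∈ S, ((N x y w * a w : ℕ) : ℝ) * Real.sqrt ((m w * s' : ℕ)) = (q : ℝ) := by
      have hsplit := Finset.sum_filter_add_sum_filter_not Finset.univ (fun w => m w ≠ s')
        (fun w => ((N x y w * a w : ℕ) : ℝ) * (Real.sqrt (m w) * Real.sqrt s'))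
      rw [e2] at hsplit
      have hterm1 : ∀ w ∈ S, ((N x y w * a w : ℕ) : ℝ) * (Real.sqrt (m w) * Real.sqrt s')
          = ((N x y w * a w : ℕ) : ℝ) * Real.sqrt ((m w * s' : ℕ)) := by
        intro w _
        rw [← Real.sqrt_mul (by positivity)]
        push_cast
        ring_nf
      have hterm2 : ∀ w ∈ Finset.univ.filter (fun w => ¬ (m w ≠ s')),
          ((N x y w * a w : ℕ) : ℝ) * (Real.sqrt (m w) * Real.sqrt s')
          = ((N x y w * a w * s' : ℕ) : ℝ) := by
        intro w hw
        simp only [Finset.mem_filter, not_not] at hw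
        rw [hw.2, Real.mul_self_sqrt (by positivity)]
        push_cast
        ring
      rw [Finset.sum_congr rfl hterm1, Finset.sum_congr rfl hterm2] at hsplit
      rw [hq]
      push_cast
      push_cast at hsplit
      linarith [hsplit]
    have hzero := aux_sum_sqrt_rat S (fun w => m w * s') (fun w => N x y w * a w)
      (by
        intro w hw
        rw [hS, Finset.mem_filter] at hw
        intro hsqr
        exact hw.2 (aux_squarefree_eq (hsf w) hsfs' hsqr)) q e3
    intro w hw
    by_contra hne
    have hwS : w ∈ S := by rw [hS, Finset.mem_filter]; exact ⟨Finset.mem_univ w, hne⟩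
    have := hzero w hwS
    rcases Nat.mul_eq_zero.mp this with h' | h'
    · exact hw h'
    · exact (ha0 w).ne' h'
  -- the quotient group of positive reals modulo rationals
  set Srat : Subgroup ℝˣ := (Units.map (algebraMap ℚ ℝ).toMonoidHom).range with hSrat
  set u : I → ℝˣ := fun x => Units.mk0 (d x) (hd_pos x).ne' with hu
  have hmk : ∀ v w : ℝˣ, (∃ qr : ℚ, qr ≠ 0 ∧ (w : ℝ) = (qr : ℝ) * (v : ℝ)) →
      (QuotientGroup.mk v : ℝˣ ⧸ Srat) = QuotientGroup.mk w := by
    rintro v w ⟨qr, hqr, hqw⟩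
    rw [QuotientGroup.eq]
    refine ⟨Units.mk0 qr hqr, ?_⟩
    ext
    push_cast [eq_ratCast]
    rw [hqw]
    field_simp
    simp
  have hmk' : ∀ v w : ℝˣ, (QuotientGroup.mk v : ℝˣ ⧸ Srat) = QuotientGroup.mk w →
      ∃ qr : ℚ, (w : ℝ) = (qr : ℝ) * (v : ℝ) := by
    intro v w hvw
    rw [QuotientGroup.eq] at hvw
    obtain ⟨qu, hqu⟩ := hvw
    refine ⟨qu, ?_⟩
    have hval : ((qu : ℚ) : ℝ) = ((v⁻¹ * w : ℝˣ) : ℝ) := by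
      rw [← hqu]
      push_cast [eq_ratCast]
      rfl
    have hv : ((v : ℝ)) ≠ 0 := Units.ne_zero v
    rw [Units.val_mul, Units.val_inv_eq_inv_val] at hval
    rw [hval]
    field_simp
  have huval : ∀ x, ((u x : ℝ)) = d x := fun x => rfl
  have hMEQ : ∀ x y : I,
      (QuotientGroup.mk (u x) : ℝˣ ⧸ Srat) = QuotientGroup.mk (u y) ↔ m x = m y := by
    intro x y
    constructor
    · intro hxy
      obtain ⟨qr, hqr⟩ := hmk' _ _ hxy
      rw [huval, huval] at hqr
      have hqr_pos : (0:ℝ) < (qr : ℝ) := by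
        have hpos : (0:ℝ) < (qr:ℝ) * d x := by rw [← hqr]; exact hd_pos y
        rcases mul_pos_iff.mp hpos with ⟨h1, _⟩ | ⟨_, h2⟩
        · exact h1
        · linarith [hd_pos x]
      have h5 : (a y : ℝ) * Real.sqrt (m y) = (qr:ℝ) * ((a x : ℝ) * Real.sqrt (m x)) := by
        rw [← hd_eq y, ← hd_eq x]; exact hqr
      have hmm : Real.sqrt (m x) * Real.sqrt (m x) = (m x : ℝ) :=
        Real.mul_self_sqrt (by positivity)
      have h6 : Real.sqrt ((m x * m y : ℕ)) = (((qr * a x * m x / a y : ℚ)) : ℝ) := by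
        push_cast
        rw [Real.sqrt_mul (by positivity)]
        have hay : (a y : ℝ) ≠ 0 := (ha_pos y).ne'
        field_simp
        linear_combination Real.sqrt (m x) * h5 + ((qr:ℝ) * (a x:ℝ)) * hmm
      have hnotirr : ¬ Irrational (Real.sqrt ((m x * m y : ℕ))) := by
        rw [h6]; exact (Rat.not_irrational _)
      have hsqr : IsSquare (m x * m y) := by
        by_contra hc
        exact hnotirr (irrational_sqrt_natCast_iff.mpr hc)
      exact aux_squarefree_eq (hsf x) (hsf y) hsqr
    · intro hm_eq
      apply hmk
      have hax : ((a x:ℚ)) ≠ 0 := by exact_mod_cast (ha0 x).ne'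
      have hay : ((a y:ℚ)) ≠ 0 := by exact_mod_cast (ha0 y).ne'
      refine ⟨(a y : ℚ) / (a x : ℚ), div_ne_zero hay hax, ?_⟩
      rw [huval, huval, hd_eq x, hd_eq y, hm_eq]
      have hax' : ((a x:ℝ)) ≠ 0 := (ha_pos x).ne'
      push_cast
      field_simp
  have hMUL : ∀ x y z : I, N x y z ≠ 0 →
      (QuotientGroup.mk (u z) : ℝˣ ⧸ Srat) = QuotientGroup.mk (u x * u y) := by
    intro x y z hN
    obtain ⟨s', t', hs'0, ht'0, hst, hsfs', hall⟩ := hKEY x y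
    have hmz : m z = s' := hall z hN
    have hsq : Real.sqrt (m x) * Real.sqrt (m y) = (t' : ℝ) * Real.sqrt s' := by
      have hc : ((m x : ℝ)) * (m y) = ((t' : ℝ)) ^ 2 * (s' : ℝ) := by exact_mod_cast hst.symm
      rw [← Real.sqrt_mul (by positivity), hc, Real.sqrt_mul (by positivity),
        Real.sqrt_sq (by positivity)]
    apply hmk
    have haz : ((a z:ℚ)) ≠ 0 := by exact_mod_cast (ha0 z).ne'
    have hnum : ((a x * a y * t' : ℚ)) ≠ 0 := by
      have := ha0 x; have := ha0 y
      positivity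
    refine ⟨(a x * a y * t' : ℚ) / (a z : ℚ), div_ne_zero hnum haz, ?_⟩
    rw [Units.val_mul, huval, huval, huval, hd_eq x, hd_eq y, hd_eq z, hmz]
    have haz' : ((a z:ℝ)) ≠ 0 := (ha_pos z).ne'
    push_cast
    field_simp
    linear_combination ((a x:ℝ) * (a y:ℝ)) * hsq
  have hSQ : ∀ x : I, (QuotientGroup.mk (u x) : ℝˣ ⧸ Srat) * QuotientGroup.mk (u x) = 1 := by
    intro x
    rw [← QuotientGroup.mk_mul, QuotientGroup.eq_one_iff]
    have hkx : ((k x : ℚ)) ≠ 0 := by exact_mod_cast (hk0 x).ne'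
    refine ⟨Units.mk0 (k x : ℚ) hkx, ?_⟩
    ext
    rw [Units.coe_map]
    show (algebraMap ℚ ℝ) ((k x : ℚ)) = ((u x * u x : ℝˣ) : ℝ)
    rw [eq_ratCast, Units.val_mul, huval]
    push_cast
    rw [← hdk x]
    ring
  set Hcar : Set (ℝˣ ⧸ Srat) :=
    Set.range (fun x : I => (QuotientGroup.mk (u x) : ℝˣ ⧸ Srat)) with hHcar
  have h_one_mem : (1 : ℝˣ ⧸ Srat) ∈ Hcar := by
    refine ⟨one, ?_⟩
    have hu1 : u one = 1 := Units.ext (by rw [huval]; exact hd_one)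
    simp [hu1]
  have h_mul_mem : ∀ {g1 g2 : ℝˣ ⧸ Srat}, g1 ∈ Hcar → g2 ∈ Hcar → g1 * g2 ∈ Hcar := by
    rintro _ _ ⟨x, rfl⟩ ⟨y, rfl⟩
    obtain ⟨z, hz⟩ := hex x y
    refine ⟨z, ?_⟩
    show (QuotientGroup.mk (u z) : ℝˣ ⧸ Srat) = _
    rw [hMUL x y z hz, QuotientGroup.mk_mul]
  have h_inv_mem : ∀ {g : ℝˣ ⧸ Srat}, g ∈ Hcar → g⁻¹ ∈ Hcar := by
    rintro _ ⟨x, rfl⟩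
    exact ⟨x, (inv_eq_of_mul_eq_one_right (hSQ x)).symm⟩
  set H : Subgroup (ℝˣ ⧸ Srat) :=
    { carrier := Hcar, one_mem' := h_one_mem, mul_mem' := h_mul_mem,
      inv_mem' := h_inv_mem } with hH
  haveI hfin : Finite (↥H) := (Set.finite_range _).to_subtype
  set deg : I → ↥H := fun x => ⟨QuotientGroup.mk (u x), ⟨x, rfl⟩⟩ with hdeg
  have hrep : ∀ g : ↥H, ∃ x : I, (QuotientGroup.mk (u x) : ℝˣ ⧸ Srat) = g.1 := fun g => g.2
  choose rep hrepspec using hrep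
  set n : ↥H → ℕ := fun g => m (rep g) with hn
  have hval_mul : ∀ g h : ↥H, (g * h).1 = g.1 * h.1 := fun g h => rfl
  have hnm : ∀ x : I, n (deg x) = m x := by
    intro x
    apply (hMEQ (rep (deg x)) x).mp
    rw [hrepspec (deg x)]
  refine ⟨↥H, Fintype.ofFinite _, inferInstance, ?_, deg, n, a, ?_, ?_, ?_, ?_, ?_, ?_, ?_,
    ha0, ?_, ?_⟩
  · -- every element squares to 1
    rintro ⟨gv, x, rfl⟩
    apply Subtype.ext
    exact hSQ x
  · -- surjectivity
    intro g
    exact ⟨rep g, Subtype.ext (hrepspec g)⟩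
  · -- deg one = 1
    apply Subtype.ext
    have hu1 : u one = 1 := Units.ext (by rw [huval]; exact hd_one)
    simp [hdeg, hu1]
  · -- deg star
    intro x
    apply Subtype.ext
    have : u (star x) = u x := Units.ext (by rw [huval, huval]; exact hd_star x)
    simp [hdeg, this]
  · -- multiplicativity
    intro x y z hN
    apply Subtype.ext
    rw [hval_mul]
    show (QuotientGroup.mk (u z) : ℝˣ ⧸ Srat) = QuotientGroup.mk (u x) * QuotientGroup.mk (u y)
    rw [hMUL x y z hN.ne', QuotientGroup.mk_mul]
  · -- injectivity of n
    intro g g' hgg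
    have : (QuotientGroup.mk (u (rep g)) : ℝˣ ⧸ Srat) = QuotientGroup.mk (u (rep g')) :=
      (hMEQ _ _).mpr hgg
    apply Subtype.ext
    rw [← hrepspec g, ← hrepspec g', this]
  · -- squarefree and positive
    exact fun g => ⟨hsf (rep g), hm0 (rep g)⟩
  · -- n 1 = 1
    have hk1 : k one = 1 := by
      have : ((k one : ℝ)) = 1 := by rw [← hdk one, hd_one]; norm_num
      exact_mod_cast this
    have hm_one : m one = 1 := by
      have h1 : a one ^ 2 * m one = 1 := by rw [hprod one, hk1]
      exact Nat.dvd_one.mp (Dvd.intro_left _ h1)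
    have hdeg_one : deg one = 1 := by
      apply Subtype.ext
      have hu1 : u one = 1 := Units.ext (by rw [huval]; exact hd_one)
      simp [hdeg, hu1]
    rw [← hdeg_one, hnm one, hm_one]
  · -- dimension formula
    intro x
    rw [hnm x]
    exact hd_eq x
  · -- the ratio of squarefree parts
    intro g h
    set xg := rep g with hxg
    set xh := rep h with hxh
    set xp := rep (g * h) with hxp
    have hgh : (QuotientGroup.mk (u xp) : ℝˣ ⧸ Srat) = QuotientGroup.mk (u xg * u xh) := by
      rw [QuotientGroup.mk_mul, hrepspec (g * h), hval_mul, hrepspec g, hrepspec h]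
    obtain ⟨qr, hqr⟩ := hmk' _ _ hgh
    rw [Units.val_mul, huval, huval, huval] at hqr
    have hqr_pos : (0:ℚ) < qr := by
      have hpos : (0:ℝ) < (qr:ℝ) * d xp := by
        rw [← hqr]; exact mul_pos (hd_pos xg) (hd_pos xh)
      have : (0:ℝ) < (qr:ℝ) := by
        rcases mul_pos_iff.mp hpos with ⟨h1, _⟩ | ⟨_, h2⟩
        · exact h1
        · linarith [hd_pos xp]
      exact_mod_cast this
    set r : ℚ := qr * (a xp) / ((a xg) * (a xh)) with hr
    have hr_pos : 0 < r := by
      have h1 := ha0 xg; have h2 := ha0 xh; have h3 := ha0 xp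
      positivity
    -- real identity
    have h5 : (a xg : ℝ) * Real.sqrt (m xg) * ((a xh : ℝ) * Real.sqrt (m xh))
        = (qr:ℝ) * ((a xp : ℝ) * Real.sqrt (m xp)) := by
      rw [← hd_eq xg, ← hd_eq xh, ← hd_eq xp]; exact hqr
    have h8 : Real.sqrt (m xg) * Real.sqrt (m xh) = (r:ℝ) * Real.sqrt (m xp) := by
      have hag : ((a xg:ℝ)) ≠ 0 := (ha_pos xg).ne'
      have hah : ((a xh:ℝ)) ≠ 0 := (ha_pos xh).ne'
      have hrc : (r:ℝ) = (qr:ℝ) * (a xp : ℝ) / ((a xg : ℝ) * (a xh : ℝ)) := by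
        rw [hr]; push_cast; ring
      rw [hrc]
      field_simp
      linear_combination h5
    have hsqC : Real.sqrt (m xp) * Real.sqrt (m xp) = (m xp : ℝ) :=
      Real.mul_self_sqrt (by positivity)
    have hr2 : (r:ℚ) ^ 2 * (m xp) = (m xg) * (m xh) := by
      have hreal : (r:ℝ) ^ 2 * (m xp) = (m xg : ℝ) * (m xh) := by
        have hA : Real.sqrt (m xg) * Real.sqrt (m xg) = (m xg : ℝ) :=
          Real.mul_self_sqrt (by positivity)
        have hB : Real.sqrt (m xh) * Real.sqrt (m xh) = (m xh : ℝ) :=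
          Real.mul_self_sqrt (by positivity)
        have h9 : (Real.sqrt (m xg) * Real.sqrt (m xh)) * (Real.sqrt (m xg) * Real.sqrt (m xh))
            = ((r:ℝ) * Real.sqrt (m xp)) * ((r:ℝ) * Real.sqrt (m xp)) := by rw [h8]
        linear_combination (-1 : ℝ) * h9 - (r:ℝ)^2 * hsqC
          + (Real.sqrt (m xh) * Real.sqrt (m xh)) * hA + (m xg : ℝ) * hB
      exact_mod_cast hreal
    -- extract a natural number
    set A' : ℕ := r.num.natAbs with hA'
    set B' : ℕ := r.den with hB'
    have hnum_pos : 0 < r.num := Rat.num_pos.mpr hr_pos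
    have hA'_pos : 0 < A' := by
      rw [hA']; exact Int.natAbs_pos.mpr hnum_pos.ne'
    have hr_eq : r = (A' : ℚ) / (B' : ℚ) := by
      have h0 : (A' : ℤ) = r.num := by rw [hA']; exact Int.natAbs_of_nonneg hnum_pos.le
      have h1 : ((A':ℚ)) = (r.num : ℚ) := by exact_mod_cast congrArg (fun z : ℤ => (z:ℚ)) h0
      rw [h1, hB', Rat.num_div_den]
    have hB'0 : ((B':ℚ)) ≠ 0 := by
      rw [hB']; exact_mod_cast r.den_nz
    have hnat : A' ^ 2 * m xp = B' ^ 2 * (m xg * m xh) := by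
      have hq2 : ((A':ℚ)/(B':ℚ)) ^ 2 * (m xp) = (m xg : ℚ) * (m xh) := by
        rw [← hr_eq]; exact hr2
      have : ((A':ℚ)) ^ 2 * (m xp) = ((B':ℚ)) ^ 2 * ((m xg : ℚ) * (m xh)) := by
        field_simp at hq2
        linear_combination hq2
      exact_mod_cast this
    have hcop : Nat.Coprime A' B' := r.reduced
    have hdvd : B' ^ 2 ∣ m xp := by
      have h1 : B' ^ 2 ∣ A' ^ 2 * m xp := by
        rw [hnat]; exact Dvd.intro _ rfl
      have hcp2 : Nat.Coprime (B' ^ 2) (A' ^ 2) := Nat.Coprime.pow 2 2 hcop.symm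
      exact hcp2.dvd_of_dvd_mul_left h1
    have hB'1 : B' = 1 := by
      have := (hsf xp) B' (by rw [← pow_two]; exact hdvd)
      exact Nat.isUnit_iff.mp this
    have hrA : r = (A' : ℚ) := by rw [hr_eq, hB'1]; simp
    refine ⟨A', hA'_pos, ?_⟩
    have hng : n g = m xg := rfl
    have hnh : n h = m xh := rfl
    have hnp : n (g * h) = m xp := rfl
    rw [hng, hnh, hnp]
    have hfinal : Real.sqrt ((m xg : ℝ) * (m xh : ℝ) / (m xp : ℝ)) = (r:ℝ) := by
      rw [Real.sqrt_div (by positivity), Real.sqrt_mul (by positivity), h8]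
      rw [mul_div_assoc, div_self (hsqm_pos xp).ne', mul_one]
    rw [hfinal, hrA]
    push_cast
    ring
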